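/- Let T be a semistandard tableau of shape λ that is not the highest weight tableau T_λ (the tableau whose i-th row is filled with i's). Define i_T = min{ a^T_{i,j} − 1 : a^T_{i,j} > i }. Then the number of minus signs remaining after cancellation in the i_T-signature of T (equivalently, ε_{i_T}(T) in the crystal structure via the Middle-Eastern reading) equals the number of boxes (i,j) with a^T_{i,j} > i and a^T_{i,j} − 1 = i_T. -/

import Mathlib

/-- A Young diagram shape: `s` rows (0-indexed), `lam i` = length of row `i`. -/
structure Shape where
  s : ℕ
  lam : ℕ → ℕ
  pos : ∀ i < s, 0 < lam i
  anti : ∀ i j, i ≤ j → j < s → lam j ≤ lam i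

/-- `T i j` = entry in the `j`-th box (0-indexed) of the `i`-th row (0-indexed);
entries lie in `{1, …, n+1}`, rows weakly increase, columns strictly increase. -/
structure IsSSYT (n : ℕ) (sh : Shape) (T : ℕ → ℕ → ℕ) : Prop where
  entries : ∀ i < sh.s, ∀ j < sh.lam i, 1 ≤ T i j ∧ T i j ≤ n + 1
  rows : ∀ i < sh.s, ∀ j j', j ≤ j' → j' < sh.lam i → T i j ≤ T i j'
  cols : ∀ i, i + 1 < sh.s → ∀ j < sh.lam (i + 1), T i j < T (i + 1) j

/-- `Psi sh T k j` = `μ^{(k)}_j` = (the `(j+1)`-th entry from the right in row `k`) minus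
the (1-based) row number `k+1`. -/
def Psi (sh : Shape) (T : ℕ → ℕ → ℕ) (k j : ℕ) : ℤ :=
  (T k (sh.lam k - 1 - j) : ℤ) - (k + 1)


/-- Row `i` read right to left. -/
def rowWord (sh : Shape) (T : ℕ → ℕ → ℕ) (i : ℕ) : List ℕ :=
  (List.range (sh.lam i)).reverse.map (T i)

/-- Middle-Eastern reading: rows right to left, top to bottom. -/
def meWord (sh : Shape) (T : ℕ → ℕ → ℕ) : List ℕ :=
  ((List.range sh.s).map (rowWord sh T)).flatten

/-- Column `j` read top to bottom. -/
def colWord (sh : Shape) (T : ℕ → ℕ → ℕ) (j : ℕ) : List ℕ :=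
  ((List.range sh.s).filter (fun i => j < sh.lam i)).map (fun i => T i j)

/-- Far-Eastern reading: columns top to bottom, right to left. -/
def feWord (sh : Shape) (T : ℕ → ℕ → ℕ) : List ℕ :=
  ((List.range (if sh.s = 0 then 0 else sh.lam 0)).reverse.map (colWord sh T)).flatten

/-- `ε_i` of a word in letters `{1,…,n+1}` (tensor product rule): the number of
uncancelled `−`'s, i.e. the maximum over prefixes of `#(i+1) − #(i)` (and `0`). -/
def epsWord (i : ℕ) (w : List ℕ) : ℤ :=
  ((List.range (w.length + 1)).map
    (fun k => ((w.take k).count (i + 1) : ℤ) - ((w.take k).count i : ℤ))).foldr max 0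

/-- `φ_i` of a word: the number of uncancelled `+`'s, i.e. the maximum over suffixes of
`#(i) − #(i+1)` (and `0`). -/
def phiWord (i : ℕ) (w : List ℕ) : ℤ :=
  ((List.range (w.length + 1)).map
    (fun k => ((w.drop k).count i : ℤ) - ((w.drop k).count (i + 1) : ℤ))).foldr max 0

/-- Position (plus one) of the rightmost uncancelled `−`: the largest `k` such that the
prefix of length `k` realizes `ε_i`. -/
def ePos (i : ℕ) (w : List ℕ) : ℕ :=
  ((List.range (w.length + 1)).filter
    (fun k => ((w.take k).count (i + 1) : ℤ) - ((w.take k).count i : ℤ) = epsWord i w)).foldr max 0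

/-- Kashiwara raising operator on words: change the `i+1` at the rightmost uncancelled `−`
into an `i` (identity when `ε_i = 0`). -/
def eWord (i : ℕ) (w : List ℕ) : List ℕ :=
  if epsWord i w ≤ 0 then w else w.set (ePos i w - 1) i

/-- Position of the leftmost uncancelled `+`: the smallest `k` such that the suffix starting
at `k` realizes `φ_i`. -/
def fPos (i : ℕ) (w : List ℕ) : ℕ :=
  ((List.range (w.length + 1)).filter
    (fun k => ((w.drop k).count i : ℤ) - ((w.drop k).count (i + 1) : ℤ) = phiWord i w)).foldr min w.length

/-- Kashiwara lowering operator on words: change the `i` at the leftmost uncancelled `+`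
into an `i+1` (identity when `φ_i = 0`). -/
def fWord (i : ℕ) (w : List ℕ) : List ℕ :=
  if phiWord i w ≤ 0 then w else w.set (fPos i w) (i + 1)
namespace EpsAux

/-- prefix count difference -/
def dct (i : ℕ) (w : List ℕ) (k : ℕ) : ℤ :=
  ((w.take k).count (i + 1) : ℤ) - ((w.take k).count i : ℤ)

lemma foldr_max_nonneg (l : List ℤ) : 0 ≤ l.foldr max 0 := by
  induction l with
  | nil => simp
  | cons a l ih => exact le_trans ih (le_max_right _ _)

lemma le_foldr_max {l : List ℤ} {x : ℤ} (h : x ∈ l) : x ≤ l.foldr max 0 := by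
  induction l with
  | nil => simp at h
  | cons a l ih =>
    rcases List.mem_cons.mp h with rfl | h
    · exact le_max_left _ _
    · exact le_trans (ih h) (le_max_right _ _)

lemma foldr_max_le {l : List ℤ} {b : ℤ} (hb : 0 ≤ b) (h : ∀ x ∈ l, x ≤ b) :
    l.foldr max 0 ≤ b := by
  induction l with
  | nil => simpa
  | cons a l ih => exact max_le (h a (.head _)) (ih fun x hx => h x (.tail _ hx))

lemma eps_nonneg (i : ℕ) (w : List ℕ) : 0 ≤ epsWord i w := foldr_max_nonneg _

lemma dct_le_eps (i : ℕ) (w : List ℕ) {k : ℕ} (hk : k ≤ w.length) :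
    dct i w k ≤ epsWord i w :=
  le_foldr_max (List.mem_map.mpr ⟨k, List.mem_range.mpr (by omega), rfl⟩)

lemma eps_le {i : ℕ} {w : List ℕ} {b : ℤ} (hb : 0 ≤ b)
    (h : ∀ k ≤ w.length, dct i w k ≤ b) : epsWord i w ≤ b := by
  refine foldr_max_le hb ?_
  intro x hx
  obtain ⟨k, hk, rfl⟩ := List.mem_map.mp hx
  exact h k (Nat.lt_succ_iff.mp (List.mem_range.mp hk))

lemma dct_append (i : ℕ) (v w : List ℕ) (k : ℕ) :
    dct i (v ++ w) k = dct i v k + dct i w (k - v.length) := by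
  unfold dct
  rw [List.take_append, List.count_append, List.count_append]
  push_cast
  ring

lemma dct_zero (i : ℕ) (w : List ℕ) : dct i w 0 = 0 := by simp [dct]

lemma dct_length (i : ℕ) (v : List ℕ) {k : ℕ} (hk : v.length ≤ k) :
    dct i v k = (v.count (i + 1) : ℤ) - v.count i := by
  unfold dct
  rw [List.take_of_length_le hk]

lemma eps_append (i : ℕ) (v w : List ℕ) :
    epsWord i (v ++ w) =
      max (epsWord i v) (((v.count (i + 1) : ℤ) - v.count i) + epsWord i w) := by
  apply le_antisymm
  · refine eps_le (le_max_of_le_left (eps_nonneg i v)) ?_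
    intro k hk
    rw [dct_append]
    rcases le_or_gt k v.length with h | h
    · have h0 : k - v.length = 0 := by omega
      rw [h0, dct_zero, add_zero]
      exact le_max_of_le_left (dct_le_eps i v h)
    · rw [dct_length i v h.le]
      have h2 : dct i w (k - v.length) ≤ epsWord i w := by
        refine dct_le_eps i w ?_
        have := List.length_append (as := v) (bs := w)
        simp only [List.length_append] at hk
        omega
      exact le_max_of_le_right (by linarith)
  · have hnet : (v.count (i + 1) : ℤ) - v.count i ≤ epsWord i (v ++ w) := by
      have h := dct_le_eps i (v ++ w) (k := v.length) (by simp)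
      rwa [dct_append, dct_length i v le_rfl, Nat.sub_self, dct_zero, add_zero] at h
    apply max_le
    · refine eps_le (eps_nonneg _ _) ?_
      intro k hk
      have h := dct_le_eps i (v ++ w) (k := k) (by simp; omega)
      rwa [dct_append, (by omega : k - v.length = 0), dct_zero, add_zero] at h
    · have hw : epsWord i w ≤ epsWord i (v ++ w) - ((v.count (i + 1) : ℤ) - v.count i) := by
        refine eps_le (by linarith [eps_nonneg i (v ++ w)]) ?_
        intro k hk
        have h := dct_le_eps i (v ++ w) (k := v.length + k) (by simp; omega)
        rw [dct_append, dct_length i v (by omega), Nat.add_sub_cancel_left] at h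
        linarith
      linarith

lemma eps_count_eq_zero_left {i : ℕ} {w : List ℕ} (h : w.count i = 0) :
    epsWord i w = w.count (i + 1) := by
  apply le_antisymm
  · refine eps_le (by positivity) ?_
    intro k hk
    unfold dct
    have h1 : (w.take k).count (i + 1) ≤ w.count (i + 1) := (List.take_sublist k w).count_le _
    have h2 : (0 : ℤ) ≤ ((w.take k).count i : ℤ) := by positivity
    have h3 : ((w.take k).count (i + 1) : ℤ) ≤ (w.count (i + 1) : ℤ) := by exact_mod_cast h1
    linarith
  · have h' := dct_le_eps i w (le_refl w.length)
    rwa [dct_length i w le_rfl, h, Nat.cast_zero, sub_zero] at h'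

lemma eps_count_eq_zero_right {i : ℕ} {w : List ℕ} (h : w.count (i + 1) = 0) :
    epsWord i w = 0 := by
  apply le_antisymm
  · refine eps_le le_rfl ?_
    intro k hk
    unfold dct
    have h1 : (w.take k).count (i + 1) = 0 :=
      Nat.le_zero.mp (h ▸ (List.take_sublist k w).count_le _)
    rw [h1]
    have h2 : (0 : ℤ) ≤ ((w.take k).count i : ℤ) := by positivity
    push_cast
    linarith
  · exact eps_nonneg _ _

end EpsAux

namespace EpsAux

lemma count_map_eq_countP (f : ℕ → ℕ) (l : List ℕ) (a : ℕ) :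
    (l.map f).count a = l.countP (fun x => decide (f x = a)) := by
  induction l with
  | nil => rfl
  | cons x l ih =>
    by_cases h : f x = a <;>
      simp [List.count_cons, List.countP_cons, h, ih]

lemma countP_range (L : ℕ) (p : ℕ → Prop) [DecidablePred p] :
    (List.range L).countP (fun x => decide (p x)) = ((Finset.range L).filter p).card := by
  induction L with
  | zero => rfl
  | succ n ih =>
    rw [List.range_succ, List.countP_append, Finset.range_add_one, Finset.filter_insert]
    by_cases h : p n
    · rw [if_pos h, Finset.card_insert_of_notMem (by simp)]
      simp [List.countP_cons, h, ih]
    · rw [if_neg h]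
      simp [List.countP_cons, h, ih]

lemma count_rowWord (sh : Shape) (T : ℕ → ℕ → ℕ) (i a : ℕ) :
    (rowWord sh T i).count a = ((Finset.range (sh.lam i)).filter (fun j => T i j = a)).card := by
  unfold rowWord
  rw [List.map_reverse, List.count_reverse, count_map_eq_countP, countP_range]

lemma mem_rowWord {sh : Shape} {T : ℕ → ℕ → ℕ} {i x : ℕ} (hx : x ∈ rowWord sh T i) :
    ∃ j < sh.lam i, T i j = x := by
  unfold rowWord at hx
  obtain ⟨j, hj, rfl⟩ := List.mem_map.mp hx
  exact ⟨j, by simpa using hj, rfl⟩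

lemma count_flatten_map (a : ℕ) (f : ℕ → List ℕ) (l : List ℕ) :
    ((l.map f).flatten).count a = (l.map (fun i => (f i).count a)).sum := by
  induction l with
  | nil => rfl
  | cons i l ih => simp [List.count_append, ih]

lemma sum_map_range (k : ℕ) (g : ℕ → ℕ) :
    ((List.range k).map g).sum = ∑ i ∈ Finset.range k, g i := by
  induction k with
  | zero => simp
  | succ n ih => rw [List.range_succ, Finset.sum_range_succ]; simp [ih]

end EpsAux

open EpsAux in

/-- If `T` is a semistandard tableau of shape `λ` which is not the highest
weight tableau, and `i_T = min { a^T_{i,j} − 1 : a^T_{i,j} > i }`, then `ε_{i_T}(T)`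
(computed via the Middle-Eastern reading) equals the number of boxes `(i,j)` with
`a^T_{i,j} > i` and `a^T_{i,j} − 1 = i_T`.  (Rows are 0-indexed, so the 1-based row
number of row `i` is `i+1`.) -/
theorem eps_iT_eq_card (n : ℕ) (sh : Shape) (T : ℕ → ℕ → ℕ) (hT : IsSSYT n sh T)
    (iT : ℕ)
    (hiT : IsLeast {v | ∃ i < sh.s, ∃ j < sh.lam i, i + 1 < T i j ∧ v = T i j - 1} iT) :
    epsWord iT (meWord sh T) =
      ∑ i ∈ Finset.range sh.s,
        (((Finset.range (sh.lam i)).filter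
            (fun j => i + 1 < T i j ∧ T i j - 1 = iT)).card : ℤ) := by
  obtain ⟨hmem, hlb⟩ := hiT
  obtain ⟨iw, hiws, jw, hjw, hTw, hvw⟩ := hmem
  -- every entry is at least its (1-based) row number
  have F1 : ∀ i, i < sh.s → ∀ j, j < sh.lam i → i + 1 ≤ T i j := by
    intro i
    induction i with
    | zero => intro hi j hj; exact (hT.entries 0 hi j hj).1
    | succ i ih =>
      intro hi j hj
      have hji : j < sh.lam i := lt_of_lt_of_le hj (sh.anti i (i + 1) (by omega) hi)
      have h1 := hT.cols i hi j hj
      have h2 := ih (by omega) j hji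
      omega
  have hiT1 : 1 ≤ iT := by
    have := F1 iw hiws jw hjw
    omega
  -- any entry equal to iT lies in row iT - 1
  have F2 : ∀ i, i < sh.s → ∀ j, j < sh.lam i → T i j = iT → i + 1 = iT := by
    intro i hi j hj hv
    have h1 := F1 i hi j hj
    by_contra hne
    have hlt : i + 1 < T i j := by omega
    have h2 := hlb ⟨i, hi, j, hj, hlt, rfl⟩
    omega
  have hrow_noiT : ∀ i, i < sh.s → i + 1 ≠ iT → (rowWord sh T i).count iT = 0 := by
    intro i hi hne
    rw [List.count_eq_zero]
    intro hmem'
    obtain ⟨j, hj, hTj⟩ := mem_rowWord hmem'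
    exact hne (F2 i hi j hj hTj)
  have hrow_no_upper : ∀ i, i < sh.s → iT < i → (rowWord sh T i).count (iT + 1) = 0 := by
    intro i hi hgt
    rw [List.count_eq_zero]
    intro hmem'
    obtain ⟨j, hj, hTj⟩ := mem_rowWord hmem'
    have := F1 i hi j hj
    omega
  set m := min iT sh.s with hm
  have hsplit : meWord sh T =
      ((List.range m).map (rowWord sh T)).flatten ++
      (((List.range (sh.s - m)).map (fun x => m + x)).map (rowWord sh T)).flatten := by
    have e1 : List.range sh.s = List.range m ++ (List.range (sh.s - m)).map (fun x => m + x) := by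
      rw [← List.range_add]
      congr 1
      omega
    unfold meWord
    rw [e1, List.map_append, List.flatten_append]
  set A : List ℕ := ((List.range m).map (rowWord sh T)).flatten with hA
  set Z : List ℕ := (((List.range (sh.s - m)).map (fun x => m + x)).map (rowWord sh T)).flatten
    with hZdef
  have hZcountiT : Z.count iT = 0 := by
    rw [hZdef, count_flatten_map]
    apply List.sum_eq_zero
    intro x hx
    obtain ⟨r, hr, rfl⟩ := List.mem_map.mp hx
    obtain ⟨x2, hx2, rfl⟩ := List.mem_map.mp hr
    rw [List.mem_range] at hx2
    exact hrow_noiT (m + x2) (by omega) (by omega)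
  have hepsZ : epsWord iT Z = (Z.count (iT + 1) : ℤ) := eps_count_eq_zero_left hZcountiT
  obtain ⟨hepsA, hZA⟩ : epsWord iT A = (A.count (iT + 1) : ℤ) ∧ Z.count (iT + 1) ≤ A.count iT := by
    rcases le_or_gt iT sh.s with hc | hc
    · -- the row iT - 1 exists
      have hmiT : m = iT := by omega
      set i0 := iT - 1 with hi0def
      have hi0s : i0 < sh.s := by omega
      set L := sh.lam i0 with hL
      set A0 := (Finset.range L).filter (fun j => T i0 j = iT) with hA0
      set t := A0.card with ht
      have htL : t ≤ L := by
        calc t ≤ (Finset.range L).card := Finset.card_filter_le _ _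
        _ = L := Finset.card_range L
      have hge : ∀ j, j < L → iT ≤ T i0 j := by
        intro j hj
        have := F1 i0 hi0s j hj
        omega
      have hkey : ∀ j, j < L → (T i0 j = iT ↔ j < t) := by
        intro j hj
        constructor
        · intro hTj
          have hsub : Finset.range (j + 1) ⊆ A0 := by
            intro k hk
            simp only [Finset.mem_range] at hk
            have hkL : k < L := by omega
            have h1 : T i0 k ≤ T i0 j := hT.rows i0 hi0s k j (by omega) hj
            have h2 := hge k hkL
            simp only [hA0, Finset.mem_filter, Finset.mem_range]
            exact ⟨hkL, by omega⟩
          have hcard := Finset.card_le_card hsub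
          simp only [Finset.card_range] at hcard
          omega
        · intro hjt
          by_contra hne
          have hsub : A0 ⊆ Finset.range j := by
            intro k hk
            simp only [hA0, Finset.mem_filter, Finset.mem_range] at hk
            obtain ⟨hkL, hTk⟩ := hk
            simp only [Finset.mem_range]
            by_contra hkj
            push_neg at hkj
            have h1 : T i0 j ≤ T i0 k := hT.rows i0 hi0s j k hkj hkL
            have h2 := hge j hj
            omega
          have hcard := Finset.card_le_card hsub
          simp only [Finset.card_range] at hcard
          omega
      set w1 : List ℕ := ((List.range (L - t)).map (fun x => t + x)).reverse.map (T i0) with hw1def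
      set w2 : List ℕ := (List.range t).reverse.map (T i0) with hw2def
      have hRsplit : rowWord sh T i0 = w1 ++ w2 := by
        rw [hw1def, hw2def]
        unfold rowWord
        rw [show sh.lam i0 = t + (L - t) from by omega, List.range_add, List.reverse_append,
          List.map_append]
      have hw2mem : ∀ x ∈ w2, x = iT := by
        intro x hx
        rw [hw2def] at hx
        obtain ⟨j, hj, rfl⟩ := List.mem_map.mp hx
        rw [List.mem_reverse, List.mem_range] at hj
        exact (hkey j (by omega)).mpr hj
      have hw2len : w2.length = t := by rw [hw2def]; simp
      have hw2countiT : w2.count iT = t := by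
        rw [← hw2len]
        apply List.count_eq_length.mpr
        intro b hb
        exact (hw2mem b hb).symm
      have hw2count1 : w2.count (iT + 1) = 0 := by
        rw [List.count_eq_zero]
        intro hmem'
        have := hw2mem _ hmem'
        omega
      have hw1count : w1.count iT = 0 := by
        rw [List.count_eq_zero]
        intro hmem'
        rw [hw1def] at hmem'
        obtain ⟨j, hj, hTj⟩ := List.mem_map.mp hmem'
        rw [List.mem_reverse, List.mem_map] at hj
        obtain ⟨x, hx, rfl⟩ := hj
        rw [List.mem_range] at hx
        have h1 := (hkey (t + x) (by omega)).mp hTj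
        omega
      have hepsR : epsWord iT (rowWord sh T i0) = ((rowWord sh T i0).count (iT + 1) : ℤ) := by
        rw [hRsplit, eps_append, eps_count_eq_zero_left hw1count,
          eps_count_eq_zero_right hw2count1, List.count_append, hw2count1, hw1count]
        push_cast
        simp
      have hRcountiT : (rowWord sh T i0).count iT = t := by
        rw [hRsplit, List.count_append, hw1count, hw2countiT, zero_add]
      have hBcount : (((List.range i0).map (rowWord sh T)).flatten).count iT = 0 := by
        rw [count_flatten_map]
        apply List.sum_eq_zero
        intro x hx
        obtain ⟨i, hi, rfl⟩ := List.mem_map.mp hx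
        rw [List.mem_range] at hi
        exact hrow_noiT i (by omega) (by omega)
      have hAsplit : A = ((List.range i0).map (rowWord sh T)).flatten ++ rowWord sh T i0 := by
        rw [hA, show m = i0 + 1 from by omega, List.range_succ, List.map_append,
          List.flatten_append]
        simp
      have hepsA : epsWord iT A = (A.count (iT + 1) : ℤ) := by
        rw [hAsplit, eps_append, eps_count_eq_zero_left hBcount, hepsR, hBcount,
          List.count_append]
        push_cast
        omega
      have hAcountiT : A.count iT = t := by
        rw [hAsplit, List.count_append, hBcount, hRcountiT, zero_add]
      refine ⟨hepsA, ?_⟩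
      rw [hAcountiT]
      rw [hZdef, count_flatten_map, List.map_map, sum_map_range]
      simp only [Function.comp]
      rcases Nat.eq_zero_or_pos (sh.s - m) with h0 | hpos
      · simp [h0]
      · have hiTs : iT < sh.s := by omega
        rw [show sh.s - m = (sh.s - m - 1) + 1 from by omega, Finset.sum_range_succ']
        have hz : ∑ x ∈ Finset.range (sh.s - m - 1),
            (rowWord sh T (m + (x + 1))).count (iT + 1) = 0 := by
          apply Finset.sum_eq_zero
          intro x hx
          rw [Finset.mem_range] at hx
          exact hrow_no_upper (m + (x + 1)) (by omega) (by omega)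
        rw [hz, zero_add, hmiT]
        simp only [Nat.add_zero]
        rw [count_rowWord]
        apply Finset.card_le_card
        intro j hj
        simp only [Finset.mem_filter, Finset.mem_range] at hj
        obtain ⟨hjl, hTj⟩ := hj
        have hlam : sh.lam iT ≤ L := by
          rw [hL]
          exact sh.anti i0 iT (by omega) hiTs
        have hjL : j < L := by omega
        have hcols := hT.cols i0 (by omega) j (by rw [show i0 + 1 = iT from by omega]; exact hjl)
        rw [show i0 + 1 = iT from by omega] at hcols
        simp only [hA0, Finset.mem_filter, Finset.mem_range]
        have := hge j hjL
        exact ⟨hjL, by omega⟩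
    · -- iT exceeds the number of rows: no letter iT at all, Z empty
      have hAcount0 : A.count iT = 0 := by
        rw [hA, count_flatten_map]
        apply List.sum_eq_zero
        intro x hx
        obtain ⟨i, hi, rfl⟩ := List.mem_map.mp hx
        rw [List.mem_range] at hi
        exact hrow_noiT i (by omega) (by omega)
      have hZ0 : Z.count (iT + 1) = 0 := by
        rw [hZdef, show sh.s - m = 0 from by omega]
        simp
      exact ⟨eps_count_eq_zero_left hAcount0, by omega⟩
  have hmain : epsWord iT (meWord sh T) = (A.count (iT + 1) : ℤ) := by
    rw [hsplit, eps_append, hepsA, hepsZ]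
    have h1 : (Z.count (iT + 1) : ℤ) ≤ (A.count iT : ℤ) := by exact_mod_cast hZA
    rw [max_eq_left (by linarith)]
  rw [hmain]
  have hsum0 : ∀ i ∈ Finset.range sh.s, i ∉ Finset.range m →
      (((Finset.range (sh.lam i)).filter (fun j => i + 1 < T i j ∧ T i j - 1 = iT)).card : ℤ)
        = 0 := by
    intro i hi hnotin
    rw [Finset.mem_range] at hi
    rw [Finset.mem_range, not_lt] at hnotin
    norm_num
    intro j hj h1 h2
    omega
  rw [← Finset.sum_subset (Finset.range_subset_range.mpr (by omega : m ≤ sh.s)) hsum0]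
  rw [hA, count_flatten_map, sum_map_range, Nat.cast_sum]
  apply Finset.sum_congr rfl
  intro i hi
  rw [Finset.mem_range] at hi
  rw [count_rowWord]
  norm_cast
  congr 1
  apply Finset.filter_congr
  intro j hj
  omega
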